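/- arXiv:2406.03775 — 2 statements merged into one kernel-verified Lean document; each statement's English description precedes it below -/
import Mathlib

section
/- Let d ≥ 1, N ≥ 1, and let B_1, …, B_N, C_1, …, C_N ∈ M_d(ℂ) satisfy Σ_{j=1}^{N} B_j† A B_j = Σ_{j=1}^{N} C_j† A C_j for every A ∈ M_d(ℂ). Then there exists a unitary N×N complex matrix (u_{jk})_{j,k=1}^{N} such that C_j = Σ_{k=1}^{N} u_{jk} B_k for every j = 1, …, N. -/
open scoped Matrix
set_option maxHeartbeats 1000000

open Module in
private theorem gram_unitary {E : Type*} [NormedAddCommGroup E] [InnerProductSpace ℂ E]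
    [FiniteDimensional ℂ E] {ι : Type*} [Fintype ι]
    (v w : ι → E)
    (hvw : ∀ a b, (inner ℂ (v a) (v b) : ℂ) = inner ℂ (w a) (w b)) :
    ∃ U : E ≃ₗᵢ[ℂ] E, ∀ a, U (v a) = w a := by
  classical
  let Tv : (ι → ℂ) →ₗ[ℂ] E := Fintype.linearCombination ℂ v
  let Tw : (ι → ℂ) →ₗ[ℂ] E := Fintype.linearCombination ℂ w
  have key : ∀ c c' : ι → ℂ, (inner ℂ (Tv c) (Tv c') : ℂ) = inner ℂ (Tw c) (Tw c') := by
    intro c c'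
    simp only [Tv, Tw, Fintype.linearCombination_apply, sum_inner, inner_sum,
      inner_smul_left, inner_smul_right, hvw]
  have hker : LinearMap.ker Tv ≤ LinearMap.ker Tw := by
    intro c hc
    simp only [LinearMap.mem_ker] at hc ⊢
    have h0 : (inner ℂ (Tw c) (Tw c) : ℂ) = 0 := by rw [← key, hc, inner_zero_left]
    exact inner_self_eq_zero.mp h0
  obtain ⟨f, hf⟩ : ∃ f : LinearMap.range Tv →ₗ[ℂ] E,
      ∀ c : ι → ℂ, f ⟨Tv c, LinearMap.mem_range_self _ c⟩ = Tw c := by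
    refine ⟨(Submodule.liftQ (LinearMap.ker Tv) Tw hker).comp
        Tv.quotKerEquivRange.symm.toLinearMap, fun c => ?_⟩
    have h1 : Tv.quotKerEquivRange.symm ⟨Tv c, LinearMap.mem_range_self _ c⟩
        = (LinearMap.ker Tv).mkQ c := Tv.quotKerEquivRange_symm_apply_image c _
    simp only [LinearMap.comp_apply, LinearEquiv.coe_toLinearMap, h1,
      Submodule.mkQ_apply, Submodule.liftQ_apply]
  have hinner : ∀ x y : LinearMap.range Tv,
      (inner ℂ (f x) (f y) : ℂ) = inner ℂ x y := by
    intro x y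
    obtain ⟨c, hc⟩ := x.2
    obtain ⟨c', hc'⟩ := y.2
    have hx : x = ⟨Tv c, LinearMap.mem_range_self _ c⟩ := Subtype.ext hc.symm
    have hy : y = ⟨Tv c', LinearMap.mem_range_self _ c'⟩ := Subtype.ext hc'.symm
    rw [hx, hy, hf, hf, Submodule.coe_inner]
    exact (key c c').symm
  let L : LinearMap.range Tv →ₗᵢ[ℂ] E := f.isometryOfInner hinner
  let U : E ≃ₗᵢ[ℂ] E := L.extend.toLinearIsometryEquiv rfl
  refine ⟨U, fun a => ?_⟩
  have hva : v a = Tv (Pi.single a 1) := by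
    simp [Tv, Fintype.linearCombination_apply_single]
  have hwa : w a = Tw (Pi.single a 1) := by
    simp [Tw, Fintype.linearCombination_apply_single]
  have hmem : v a ∈ LinearMap.range Tv := hva ▸ LinearMap.mem_range_self _ _
  calc U (v a) = L.extend ((⟨v a, hmem⟩ : LinearMap.range Tv) : E) :=
        L.extend.toLinearIsometryEquiv_apply rfl _
    _ = L ⟨v a, hmem⟩ := L.extend_apply _
    _ = f ⟨v a, hmem⟩ := rfl
    _ = w a := by
        have : (⟨v a, hmem⟩ : LinearMap.range Tv)
            = ⟨Tv (Pi.single a 1), LinearMap.mem_range_self _ _⟩ := Subtype.ext hva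
        rw [this, hf, ← hwa]

/-- Unitary freedom of Kraus representations: if `(B_j)` and `(C_j)` are Kraus operators of
the same completely positive map, then they are related by a unitary matrix of coefficients. -/
theorem kraus_unitary_freedom (d N : ℕ) (hd : 1 ≤ d) (hN : 1 ≤ N)
    (B C : Fin N → Matrix (Fin d) (Fin d) ℂ)
    (h : ∀ A : Matrix (Fin d) (Fin d) ℂ,
      ∑ j, (B j)ᴴ * A * B j = ∑ j, (C j)ᴴ * A * C j) :
    ∃ u : Matrix (Fin N) (Fin N) ℂ, u ∈ Matrix.unitaryGroup (Fin N) ℂ ∧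
      ∀ j, C j = ∑ k, u j k • B k := by
  classical
  -- entrywise form of the hypothesis
  have h' : ∀ p x q y : Fin d,
      ∑ j, (starRingEnd ℂ) (B j p x) * B j q y
        = ∑ j, (starRingEnd ℂ) (C j p x) * C j q y := by
    intro p x q y
    have := congrArg (fun M : Matrix (Fin d) (Fin d) ℂ => M x y)
      (h (Matrix.single p q 1))
    simpa [Matrix.sum_apply, Matrix.mul_apply, Matrix.conjTranspose_apply,
      Matrix.single, Finset.mul_sum, Finset.sum_mul, ite_mul, mul_ite,
      mul_zero, zero_mul, mul_one, one_mul, ite_and, Finset.sum_ite_eq,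
      Finset.mem_univ, if_true] using this
  let v : Fin d × Fin d → EuclideanSpace ℂ (Fin N) := fun pq => WithLp.toLp 2 (fun j => B j pq.1 pq.2)
  let w : Fin d × Fin d → EuclideanSpace ℂ (Fin N) := fun pq => WithLp.toLp 2 (fun j => C j pq.1 pq.2)
  have hvw : ∀ a b, (inner ℂ (v a) (v b) : ℂ) = inner ℂ (w a) (w b) := by
    intro a b
    simpa [PiLp.inner_apply, RCLike.inner_apply, v, w, mul_comm] using h' a.1 a.2 b.1 b.2
  obtain ⟨U, hU⟩ := gram_unitary v w hvw
  let u : Matrix (Fin N) (Fin N) ℂ := fun j k => U (EuclideanSpace.single k 1) j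
  have hsum : ∀ (g : Fin N → EuclideanSpace ℂ (Fin N)) (j : Fin N),
      (∑ k, g k) j = ∑ k, g k j := by
    intro g j
    exact map_sum (EuclideanSpace.proj j : EuclideanSpace ℂ (Fin N) →L[ℂ] ℂ)
      g Finset.univ
  have hdecomp : ∀ x : EuclideanSpace ℂ (Fin N),
      x = ∑ k, x k • EuclideanSpace.single k (1 : ℂ) := by
    intro x
    ext j
    rw [hsum]
    simp [EuclideanSpace.single_apply, Finset.sum_ite_eq]
  have hUx : ∀ (x : EuclideanSpace ℂ (Fin N)) (j : Fin N),
      U x j = ∑ k, x k * u j k := by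
    intro x j
    conv_lhs => rw [hdecomp x]
    rw [map_sum, hsum]
    refine Finset.sum_congr rfl fun k _ => ?_
    rw [map_smul]
    simp [u, PiLp.smul_apply, smul_eq_mul]
  refine ⟨u, ?_, ?_⟩
  · rw [Matrix.mem_unitaryGroup_iff']
    ext a b
    have e2 : (∑ j, (starRingEnd ℂ) (u j a) * u j b)
        = inner ℂ (U (EuclideanSpace.single a 1)) (U (EuclideanSpace.single b 1)) := by
      simp only [PiLp.inner_apply, RCLike.inner_apply, u]
      exact Finset.sum_congr rfl fun _ _ => mul_comm _ _
    have e1 : (star u * u) a b = ∑ j, (starRingEnd ℂ) (u j a) * u j b := by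
      simp [Matrix.mul_apply, Matrix.star_apply]
    rw [e1, e2, U.inner_map_map]
    simp [EuclideanSpace.inner_single_left, EuclideanSpace.single_apply,
      Matrix.one_apply, eq_comm]
  · intro j
    ext p q
    have hw : C j p q = w (p, q) j := rfl
    rw [Matrix.sum_apply]
    rw [hw, ← hU (p, q), hUx]
    exact Finset.sum_congr rfl fun k _ => by
      show v (p, q) k * u j k = (u j k • B k) p q
      simp [v, Matrix.smul_apply, mul_comm]
end

section
/- Let d ≥ 1, N ≥ 1, and let L_1, …, L_N ∈ M_d(ℂ) satisfy the completeness condition Σ_{j=1}^{N} L_j† L_j = 1, and define the linear map Φ : M_d(ℂ) → M_d(ℂ) by Φ(A) = Σ_{j=1}^{N} L_j† A L_j. Set α_j := tr(L_j)/d, M_j := L_j − α_j·1, X := Σ_{j=1}^{N} conj(α_j)·L_j, X_I := (X − X†)/(2i), and Y := −X_I + (tr(X_I)/d)·1. Then Y is Hermitian with tr(Y) = 0, each M_j satisfies tr(M_j) = 0, and for every A ∈ M_d(ℂ): Φ(A) = A + i[Y,A] + Σ_{j=1}^{N} (M_j† A M_j − (1/2){M_j† M_j, A}). -/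
set_option maxRecDepth 8000
set_option maxHeartbeats 1000000

open scoped Matrix

/-- Rewriting a unital Kraus-represented map in GKSL-like normal form: splitting each Kraus
operator into its trace part and traceless part `M_j`, the map `Φ(A) = Σ L_j† A L_j` equals
`A + i[Y,A] + Σ (M_j† A M_j − ½{M_j† M_j, A})` with `Y` traceless Hermitian. -/
theorem unital_kraus_gksl_normal_form (d N : ℕ) (hd : 1 ≤ d) (hN : 1 ≤ N)
    (L : Fin N → Matrix (Fin d) (Fin d) ℂ)
    (hcomplete : ∑ j, (L j)ᴴ * L j = 1)
    (Φ : Matrix (Fin d) (Fin d) ℂ → Matrix (Fin d) (Fin d) ℂ)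
    (hΦ : ∀ A, Φ A = ∑ j, (L j)ᴴ * A * L j)
    (α : Fin N → ℂ) (hα : ∀ j, α j = (L j).trace / d)
    (M : Fin N → Matrix (Fin d) (Fin d) ℂ) (hM : ∀ j, M j = L j - α j • 1)
    (X : Matrix (Fin d) (Fin d) ℂ) (hX : X = ∑ j, (starRingEnd ℂ) (α j) • L j)
    (XI : Matrix (Fin d) (Fin d) ℂ) (hXI : XI = (2 * Complex.I)⁻¹ • (X - Xᴴ))
    (Y : Matrix (Fin d) (Fin d) ℂ) (hY : Y = -XI + (XI.trace / d) • 1) :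
    Y.IsHermitian ∧ Y.trace = 0 ∧ (∀ j, (M j).trace = 0) ∧
      ∀ A, Φ A = A + Complex.I • (Y * A - A * Y) +
        ∑ j, ((M j)ᴴ * A * M j -
          (2 : ℂ)⁻¹ • ((M j)ᴴ * M j * A + A * ((M j)ᴴ * M j))) := by
  have hdC : (d : ℂ) ≠ 0 := Nat.cast_ne_zero.2 (by omega)
  have hstar : star ((2 * Complex.I)⁻¹) = -(2 * Complex.I)⁻¹ := by
    simp [Complex.ext_iff]
  have hermXI : XIᴴ = XI := by
    rw [hXI, Matrix.conjTranspose_smul, Matrix.conjTranspose_sub,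
      Matrix.conjTranspose_conjTranspose, hstar]
    module
  have htr : (starRingEnd ℂ) XI.trace = XI.trace := by
    have h := Matrix.trace_conjTranspose XI
    rw [hermXI] at h
    exact h.symm
  have hermY : Y.IsHermitian := by
    unfold Matrix.IsHermitian
    rw [hY, Matrix.conjTranspose_add, Matrix.conjTranspose_neg, hermXI,
      Matrix.conjTranspose_smul, Matrix.conjTranspose_one]
    congr 1
    rw [starRingEnd_apply] at htr
    simp [div_eq_mul_inv, htr, starRingEnd_apply]
  have htrY : Y.trace = 0 := by
    rw [hY]
    simp [Matrix.trace_add, Matrix.trace_neg, Matrix.trace_smul, Matrix.trace_one,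
      div_mul_cancel₀]
    field_simp
    ring
  have htrM : ∀ j, (M j).trace = 0 := by
    intro j
    rw [hM]
    simp [Matrix.trace_sub, Matrix.trace_smul, Matrix.trace_one, hα]
    field_simp
    ring
  refine ⟨hermY, htrY, htrM, ?_⟩
  intro A
  set c : ℂ := ∑ j, (starRingEnd ℂ) (α j) * α j with hc
  have hXH : Xᴴ = ∑ j, α j • (L j)ᴴ := by
    rw [hX, Matrix.conjTranspose_sum]
    simp only [Matrix.conjTranspose_smul, starRingEnd_apply, star_star]
  have hMj : ∀ j, (M j)ᴴ = (L j)ᴴ - (starRingEnd ℂ) (α j) • 1 := by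
    intro j
    rw [hM]
    simp only [Matrix.conjTranspose_sub, Matrix.conjTranspose_smul,
      Matrix.conjTranspose_one, starRingEnd_apply]
  have hsum1 : ∑ j, (M j)ᴴ * A * M j
      = (∑ j, (L j)ᴴ * A * L j) - Xᴴ * A - A * X + c • A := by
    have e : ∀ j, (M j)ᴴ * A * M j
        = (L j)ᴴ * A * L j - (α j • (L j)ᴴ) * A - A * ((starRingEnd ℂ) (α j) • L j)
          + ((starRingEnd ℂ) (α j) * α j) • A := by
      intro j
      rw [hMj, hM]
      simp only [Matrix.sub_mul, Matrix.mul_sub, Matrix.smul_mul, Matrix.mul_smul,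
        Matrix.one_mul, Matrix.mul_one, smul_smul]
      module
    rw [Finset.sum_congr rfl fun j _ => e j]
    rw [Finset.sum_add_distrib, Finset.sum_sub_distrib, Finset.sum_sub_distrib,
      ← Finset.sum_mul, ← hXH, ← Matrix.mul_sum, ← hX, ← Finset.sum_smul, ← hc]
  have hsum2 : ∑ j, (M j)ᴴ * M j = (1 : Matrix (Fin d) (Fin d) ℂ) - Xᴴ - X + c • 1 := by
    have e : ∀ j, (M j)ᴴ * M j
        = (L j)ᴴ * L j - (α j • (L j)ᴴ) - ((starRingEnd ℂ) (α j) • L j)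
          + ((starRingEnd ℂ) (α j) * α j) • 1 := by
      intro j
      rw [hMj, hM]
      simp only [Matrix.sub_mul, Matrix.mul_sub, Matrix.smul_mul, Matrix.mul_smul,
        Matrix.one_mul, Matrix.mul_one, smul_smul]
      module
    rw [Finset.sum_congr rfl fun j _ => e j]
    rw [Finset.sum_add_distrib, Finset.sum_sub_distrib, Finset.sum_sub_distrib,
      ← hXH, ← hX, ← Finset.sum_smul, ← hc, hcomplete]
  have hscal : Complex.I * (2 * Complex.I)⁻¹ = 2⁻¹ := by
    rw [mul_comm (2 : ℂ) Complex.I, mul_inv, ← mul_assoc,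
      mul_inv_cancel₀ Complex.I_ne_zero, one_mul]
  have hYA : Complex.I • (Y * A - A * Y)
      = (2 : ℂ)⁻¹ • (Xᴴ * A - A * Xᴴ - X * A + A * X) := by
    rw [hY, hXI]
    simp only [Matrix.add_mul, Matrix.mul_add, Matrix.neg_mul, Matrix.mul_neg,
      Matrix.smul_mul, Matrix.mul_smul, Matrix.sub_mul, Matrix.mul_sub,
      Matrix.one_mul, Matrix.mul_one, smul_sub, smul_add, smul_neg, smul_smul, hscal]
    module
  rw [hΦ, hYA]
  rw [Finset.sum_sub_distrib, ← Finset.smul_sum, Finset.sum_add_distrib,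
    ← Finset.sum_mul, ← Matrix.mul_sum, hsum1, hsum2]
  simp only [Matrix.sub_mul, Matrix.mul_sub, Matrix.add_mul, Matrix.mul_add,
    Matrix.smul_mul, Matrix.mul_smul, Matrix.one_mul, Matrix.mul_one]
  module
end
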